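/- In the logistic setting, suppose θ* minimizes the risk L. For any η > 0 and any θ ∈ ℝ^d: if L(θ) − L(θ*) > η, then ‖∇L(θ)‖ ≥ Λ_min·√η / ( √2·D_X·(1 + e^{D_X(‖θ*‖ + √(8η/D_X²))}) ), where ∇L(θ) = E[ −y·X/(1 + e^{y·θᵀX}) ] is the gradient of L at θ. -/

import Mathlib

open MeasureTheory ProbabilityTheory Matrix Real
open scoped ENNReal
open scoped RealInnerProductSpace

/-- The smallest eigenvalue of a (symmetric) matrix. -/
noncomputable def lambdaMin {d : ℕ} (M : Matrix (Fin d) (Fin d) ℝ) : ℝ :=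
  sInf {r : ℝ | ∃ v : Fin d → ℝ, v ≠ 0 ∧ M.mulVec v = r • v}

/-- The Euclidean norm of a vector of `Fin d → ℝ`. -/
noncomputable def euclNorm {d : ℕ} (v : Fin d → ℝ) : ℝ :=
  Real.sqrt (∑ i, v i ^ 2)

section Aux

namespace LogAux

lemma one_add_exp_pos (u : ℝ) : 0 < 1 + Real.exp u := by positivity

noncomputable def φf (u : ℝ) : ℝ := Real.log (1 + Real.exp (-u))
noncomputable def φd (u : ℝ) : ℝ := -(1 + Real.exp u)⁻¹
noncomputable def φdd (u : ℝ) : ℝ := Real.exp u / (1 + Real.exp u) ^ 2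

lemma hasDerivAt_φf (u : ℝ) : HasDerivAt φf (φd u) u := by
  have h1 : HasDerivAt (fun u : ℝ => 1 + Real.exp (-u)) (-Real.exp (-u)) u := by
    simpa using (((Real.hasDerivAt_exp (-u)).comp u (hasDerivAt_neg u)).const_add 1)
  have h2 : HasDerivAt φf (-Real.exp (-u) / (1 + Real.exp (-u))) u :=
    (Real.hasDerivAt_log (by positivity)).comp u h1 |>.congr_deriv (by ring)
  convert h2 using 1
  unfold φd
  have hprod : Real.exp u * Real.exp (-u) = 1 := by rw [← Real.exp_add]; simp
  have h3 : (1 + Real.exp u) ≠ 0 := (one_add_exp_pos u).ne'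
  have h4 : (1 + Real.exp (-u)) ≠ 0 := (one_add_exp_pos (-u)).ne'
  field_simp
  linear_combination hprod

lemma hasDerivAt_φd (u : ℝ) : HasDerivAt φd (φdd u) u := by
  have h1 : HasDerivAt (fun u : ℝ => 1 + Real.exp u) (Real.exp u) u := by
    simpa using (Real.hasDerivAt_exp u).const_add 1
  have h2 : HasDerivAt (fun u : ℝ => (1 + Real.exp u)⁻¹)
      (-Real.exp u / (1 + Real.exp u) ^ 2) u := h1.inv (one_add_exp_pos u).ne'
  have := h2.neg
  have e : φd = -fun u => (1 + Real.exp u)⁻¹ := by funext u; rfl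
  rw [e, φdd, show Real.exp u / (1 + Real.exp u) ^ 2
    = -(-Real.exp u / (1 + Real.exp u) ^ 2) by ring]
  exact this

lemma φdd_nonneg (u : ℝ) : 0 ≤ φdd u := by
  unfold φdd; positivity

lemma φdd_le_quarter (u : ℝ) : φdd u ≤ 1 / 4 := by
  unfold φdd
  rw [div_le_div_iff₀ (by positivity) (by norm_num)]
  nlinarith [sq_nonneg (1 - Real.exp u)]

lemma φdd_ge {u R : ℝ} (hu : |u| ≤ R) : (2 * (1 + Real.exp R))⁻¹ ≤ φdd u := by
  unfold φdd
  rw [abs_le] at hu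
  have h1 : Real.exp u ≤ Real.exp R := Real.exp_le_exp.2 hu.2
  have h2 : Real.exp (-u) ≤ Real.exp R := Real.exp_le_exp.2 (by linarith [hu.1])
  have hprod : Real.exp u * Real.exp (-u) = 1 := by rw [← Real.exp_add]; simp
  have hEu := Real.exp_pos u
  have hER := Real.exp_pos R
  rw [inv_le_iff_one_le_mul₀ (by positivity), div_mul_eq_mul_div, le_div_iff₀ (by positivity)]
  have key : (1 + Real.exp u) ^ 2 ≤ Real.exp u * (2 * (1 + Real.exp R)) := by
    have : (1 + Real.exp u) ^ 2 = Real.exp u * (2 + Real.exp u + Real.exp (-u)) := by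
      linear_combination -hprod
    rw [this]
    have : 2 + Real.exp u + Real.exp (-u) ≤ 2 * (1 + Real.exp R) := by linarith
    exact mul_le_mul_of_nonneg_left this hEu.le
  linarith

/-- Tangent line inequality for a function with monotone derivative on a convex set. -/
lemma tangent_line {s : Set ℝ} (hs : Convex ℝ s) {f f' : ℝ → ℝ}
    (hd : ∀ x ∈ s, HasDerivAt f (f' x) x) (hm : MonotoneOn f' s)
    {a b : ℝ} (ha : a ∈ s) (hb : b ∈ s) : f a + f' a * (b - a) ≤ f b := by
  rcases lt_trichotomy a b with hab | rfl | hab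
  · have hsub : Set.Icc a b ⊆ s := hs.ordConnected.out ha hb
    obtain ⟨c, hc, hc'⟩ := exists_hasDerivAt_eq_slope f f' hab
      (fun x hx => (hd x (hsub hx)).continuousAt.continuousWithinAt)
      (fun x hx => hd x (hsub (Set.mem_Icc_of_Ioo hx)))
    have hcs : c ∈ s := hsub ⟨hc.1.le, hc.2.le⟩
    have : f' a ≤ f' c := hm ha hcs hc.1.le
    have hba : 0 < b - a := by linarith
    rw [eq_div_iff hba.ne'] at hc'
    nlinarith
  · simp
  · have hsub : Set.Icc b a ⊆ s := hs.ordConnected.out hb ha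
    obtain ⟨c, hc, hc'⟩ := exists_hasDerivAt_eq_slope f f' hab
      (fun x hx => (hd x (hsub hx)).continuousAt.continuousWithinAt)
      (fun x hx => hd x (hsub (Set.mem_Icc_of_Ioo hx)))
    have hcs : c ∈ s := hsub ⟨hc.1.le, hc.2.le⟩
    have : f' c ≤ f' a := hm hcs ha hc.2.le
    have hba : 0 < a - b := by linarith
    rw [eq_div_iff hba.ne'] at hc'
    nlinarith

lemma mono_φd : MonotoneOn φd (Set.univ : Set ℝ) := by
  have := monotoneOn_of_deriv_nonneg (convex_univ (𝕜 := ℝ))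
    (f := φd) (fun x _ => (hasDerivAt_φd x).continuousAt.continuousWithinAt)
    (fun x _ => (hasDerivAt_φd x).differentiableAt.differentiableWithinAt)
    (fun x _ => by rw [(hasDerivAt_φd x).deriv]; exact φdd_nonneg x)
  simpa using this

/-- Monotone derivative of the strongly convex modification on `Icc (-R) R`. -/
lemma mono_strong {R : ℝ} :
    MonotoneOn (fun u => φd u - (2 * (1 + Real.exp R))⁻¹ * u) (Set.Icc (-R) R) := by
  refine monotoneOn_of_deriv_nonneg (convex_Icc _ _) ?_ ?_ ?_
  · exact fun x _ => ((hasDerivAt_φd x).sub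
      ((hasDerivAt_id x).const_mul _)).continuousAt.continuousWithinAt
  · exact fun x _ => ((hasDerivAt_φd x).sub
      ((hasDerivAt_id x).const_mul _)).differentiableAt.differentiableWithinAt
  · intro x hx
    rw [interior_Icc] at hx
    have hD : HasDerivAt (fun u => φd u - (2 * (1 + Real.exp R))⁻¹ * u)
        (φdd x - (2 * (1 + Real.exp R))⁻¹ * 1) x :=
      (hasDerivAt_φd x).sub ((hasDerivAt_id x).const_mul _)
    rw [hD.deriv]
    have : |x| ≤ R := by rw [abs_le]; exact ⟨hx.1.le, hx.2.le⟩
    have := φdd_ge this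
    linarith

lemma mono_smooth : MonotoneOn (fun u => u / 4 - φd u) (Set.univ : Set ℝ) := by
  have hD : ∀ x : ℝ, HasDerivAt (fun u => u / 4 - φd u) (1 / 4 - φdd x) x := by
    intro x
    exact ((hasDerivAt_id x).div_const 4).sub (hasDerivAt_φd x) |>.congr_deriv (by ring)
  have := monotoneOn_of_deriv_nonneg (convex_univ (𝕜 := ℝ))
    (f := fun u => u / 4 - φd u)
    (fun x _ => (hD x).continuousAt.continuousWithinAt)
    (fun x _ => (hD x).differentiableAt.differentiableWithinAt)
    (fun x _ => by rw [(hD x).deriv]; linarith [φdd_le_quarter x])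
  simpa using this

end LogAux

namespace LogAux

lemma hT_eq (s a b : ℝ) :
    -s * (b - a) / (1 + Real.exp (s * a)) = φd (s * a) * (s * b - s * a) := by
  unfold φd; ring

lemma pt_convex (s a b : ℝ) :
    Real.log (1 + Real.exp (-s * a)) + -s * (b - a) / (1 + Real.exp (s * a))
      ≤ Real.log (1 + Real.exp (-s * b)) := by
  have key := tangent_line convex_univ (fun x _ => hasDerivAt_φf x) mono_φd
    (Set.mem_univ (s * a)) (Set.mem_univ (s * b))
  rw [hT_eq]
  have h1 : -s * a = -(s * a) := by ring
  have h2 : -s * b = -(s * b) := by ring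
  rw [h1, h2]
  simp only [φf] at key
  exact key

lemma pt_strong {s : ℝ} (hs : s = 1 ∨ s = -1) {R a b : ℝ}
    (ha : |a| ≤ R) (hb : |b| ≤ R) :
    Real.log (1 + Real.exp (-s * a)) + -s * (b - a) / (1 + Real.exp (s * a))
      + (2 * (1 + Real.exp R))⁻¹ / 2 * (b - a) ^ 2
      ≤ Real.log (1 + Real.exp (-s * b)) := by
  set c : ℝ := (2 * (1 + Real.exp R))⁻¹ with hc
  have hd : ∀ x ∈ Set.Icc (-R) R,
      HasDerivAt (fun u => φf u - c / 2 * u ^ 2) (φd x - c * x) x := by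
    intro x _
    have := (hasDerivAt_φf x).sub (((hasDerivAt_pow 2 x)).const_mul (c / 2))
    exact this.congr_deriv (by ring)
  have hmem : ∀ u : ℝ, |u| ≤ R → u ∈ Set.Icc (-R) R := by
    intro u hu; rw [abs_le] at hu; exact ⟨hu.1, hu.2⟩
  have hsa : |s * a| ≤ R := by
    rcases hs with rfl | rfl <;> simpa using ha
  have hsb : |s * b| ≤ R := by
    rcases hs with rfl | rfl <;> simpa using hb
  have key := tangent_line (convex_Icc (-R) R) hd mono_strong (hmem _ hsa) (hmem _ hsb)
  rw [hT_eq]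
  have h1 : -s * a = -(s * a) := by ring
  have h2 : -s * b = -(s * b) := by ring
  rw [h1, h2]
  simp only [φf] at key
  rcases hs with rfl | rfl <;> nlinarith [key]

lemma pt_smooth {s : ℝ} (hs : s = 1 ∨ s = -1) (a b : ℝ) :
    Real.log (1 + Real.exp (-s * b))
      ≤ Real.log (1 + Real.exp (-s * a)) + -s * (b - a) / (1 + Real.exp (s * a))
        + 1 / 8 * (b - a) ^ 2 := by
  have hd : ∀ x ∈ (Set.univ : Set ℝ),
      HasDerivAt (fun u => u ^ 2 / 8 - φf u) (x / 4 - φd x) x := by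
    intro x _
    have := ((hasDerivAt_pow 2 x).div_const 8).sub (hasDerivAt_φf x)
    exact this.congr_deriv (by push_cast; ring)
  have key := tangent_line convex_univ hd mono_smooth
    (Set.mem_univ (s * a)) (Set.mem_univ (s * b))
  rw [hT_eq]
  have h1 : -s * a = -(s * a) := by ring
  have h2 : -s * b = -(s * b) := by ring
  rw [h1, h2]
  simp only [φf] at key
  rcases hs with rfl | rfl <;> nlinarith [key]

lemma pt_jensen (s a b l : ℝ) (h0 : 0 ≤ l) (h1 : l ≤ 1) :
    Real.log (1 + Real.exp (-s * ((1 - l) * a + l * b)))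
      ≤ (1 - l) * Real.log (1 + Real.exp (-s * a))
        + l * Real.log (1 + Real.exp (-s * b)) := by
  have k1 := tangent_line convex_univ (fun x _ => hasDerivAt_φf x) mono_φd
    (Set.mem_univ (s * ((1 - l) * a + l * b))) (Set.mem_univ (s * a))
  have k2 := tangent_line convex_univ (fun x _ => hasDerivAt_φf x) mono_φd
    (Set.mem_univ (s * ((1 - l) * a + l * b))) (Set.mem_univ (s * b))
  have comb := add_le_add (mul_le_mul_of_nonneg_left k1 (by linarith : (0:ℝ) ≤ 1 - l))
    (mul_le_mul_of_nonneg_left k2 h0)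
  have hEq : (1 - l) * (φf (s * ((1 - l) * a + l * b))
        + φd (s * ((1 - l) * a + l * b)) * (s * a - s * ((1 - l) * a + l * b)))
      + l * (φf (s * ((1 - l) * a + l * b))
        + φd (s * ((1 - l) * a + l * b)) * (s * b - s * ((1 - l) * a + l * b)))
      = φf (s * ((1 - l) * a + l * b)) := by ring
  rw [hEq] at comb
  have h3 : -s * ((1 - l) * a + l * b) = -(s * ((1 - l) * a + l * b)) := by ring
  have h4 : -s * a = -(s * a) := by ring
  have h5 : -s * b = -(s * b) := by ring
  rw [h3, h4, h5]
  simp only [φf] at comb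
  exact comb

end LogAux

namespace LogAux

variable {d : ℕ}

lemma euclNorm_nonneg (v : Fin d → ℝ) : 0 ≤ euclNorm v := Real.sqrt_nonneg _

lemma sq_euclNorm (v : Fin d → ℝ) : euclNorm v ^ 2 = ∑ i, v i ^ 2 :=
  Real.sq_sqrt (Finset.sum_nonneg fun i _ => sq_nonneg _)

lemma euclNorm_eq_norm (v : Fin d → ℝ) :
    euclNorm v = ‖(WithLp.equiv 2 (Fin d → ℝ)).symm v‖ := by
  rw [EuclideanSpace.norm_eq]
  unfold euclNorm
  congr 1
  refine Finset.sum_congr rfl fun i _ => ?_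
  rw [show ((WithLp.equiv 2 (Fin d → ℝ)).symm v).ofLp i = v i from rfl, Real.norm_eq_abs, sq_abs]

lemma abs_coord_le (v : Fin d → ℝ) (i : Fin d) : |v i| ≤ euclNorm v := by
  rw [← Real.sqrt_sq_eq_abs]
  exact Real.sqrt_le_sqrt (Finset.single_le_sum (fun j _ => sq_nonneg (v j)) (Finset.mem_univ i))

lemma dot_le (g u : Fin d → ℝ) : ∑ i, g i * u i ≤ euclNorm g * euclNorm u := by
  calc ∑ i, g i * u i ≤ |∑ i, g i * u i| := le_abs_self _
    _ = Real.sqrt ((∑ i, g i * u i) ^ 2) := (Real.sqrt_sq_eq_abs _).symm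
    _ ≤ Real.sqrt ((∑ i, g i ^ 2) * ∑ i, u i ^ 2) :=
        Real.sqrt_le_sqrt (Finset.sum_mul_sq_le_sq_mul_sq _ _ _)
    _ = euclNorm g * euclNorm u := by
        unfold euclNorm
        exact Real.sqrt_mul (Finset.sum_nonneg fun i _ => sq_nonneg _) _

lemma abs_dot_le (v x : Fin d → ℝ) : |v ⬝ᵥ x| ≤ euclNorm v * euclNorm x := by
  rw [abs_le]
  constructor
  · have hneg : euclNorm (fun i => -v i) = euclNorm v := by
      unfold euclNorm
      congr 1
      exact Finset.sum_congr rfl fun i _ => by ring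
    have := dot_le (fun i => -v i) x
    have h2 : ∑ i, (fun i => -v i) i * x i = -(v ⬝ᵥ x) := by
      rw [dotProduct, ← Finset.sum_neg_distrib]
      exact Finset.sum_congr rfl fun i _ => by ring
    rw [h2, hneg] at this; linarith
  · exact dot_le v x

lemma euclNorm_smul (c : ℝ) (hc : 0 ≤ c) (v : Fin d → ℝ) :
    euclNorm (fun i => c * v i) = c * euclNorm v := by
  unfold euclNorm
  have h : ∑ i, (c * v i) ^ 2 = c ^ 2 * ∑ i, v i ^ 2 := by
    rw [Finset.mul_sum]
    exact Finset.sum_congr rfl fun i _ => by ring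
  rw [h, Real.sqrt_mul (sq_nonneg c), Real.sqrt_sq hc]

lemma eq_of_euclNorm_zero {v : Fin d → ℝ} (h : euclNorm v = 0) : v = 0 := by
  have hsum : ∑ i, v i ^ 2 = 0 := by
    have := sq_euclNorm v
    rw [h] at this; simpa using this.symm
  funext i
  have := (Finset.sum_eq_zero_iff_of_nonneg (fun j _ => sq_nonneg (v j))).mp hsum i
    (Finset.mem_univ i)
  exact pow_eq_zero_iff (by norm_num) |>.mp this

lemma euclNorm_triangle (a b : Fin d → ℝ) :
    euclNorm (fun i => a i + b i) ≤ euclNorm a + euclNorm b := by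
  rw [euclNorm_eq_norm, euclNorm_eq_norm, euclNorm_eq_norm]
  have : (WithLp.equiv 2 (Fin d → ℝ)).symm (fun i => a i + b i)
      = (WithLp.equiv 2 (Fin d → ℝ)).symm a + (WithLp.equiv 2 (Fin d → ℝ)).symm b := by
    rfl
  rw [this]
  exact norm_add_le _ _

lemma rayleigh_lower (hd : 1 ≤ d) (M : Matrix (Fin d) (Fin d) ℝ) (hM : M.IsHermitian)
    (v : Fin d → ℝ) : lambdaMin M * (∑ i, v i ^ 2) ≤ v ⬝ᵥ M.mulVec v := by
  classical
  haveI : Nontrivial (EuclideanSpace ℝ (Fin d)) := by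
    refine ⟨(WithLp.equiv 2 (Fin d → ℝ)).symm (Pi.single ⟨0, hd⟩ 1), 0, fun h => ?_⟩
    have := congrFun (congrArg (WithLp.equiv 2 (Fin d → ℝ)) h) ⟨0, hd⟩
    simp [Pi.single_apply] at this
  set T : EuclideanSpace ℝ (Fin d) →ₗ[ℝ] EuclideanSpace ℝ (Fin d) := Matrix.toEuclideanLin M with hTdef
  have hT : T.IsSymmetric := Matrix.isHermitian_iff_isSymmetric.mp hM
  set C : ℝ := ‖LinearMap.toContinuousLinearMap T‖ with hC
  have hnormT : ∀ x : EuclideanSpace ℝ (Fin d), ‖T x‖ ≤ C * ‖x‖ := by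
    intro x
    have := (LinearMap.toContinuousLinearMap T).le_opNorm x
    rwa [LinearMap.coe_toContinuousLinearMap'] at this
  have hbound : ∀ x : EuclideanSpace ℝ (Fin d), -(C * ‖x‖ ^ 2) ≤ ⟪T x, x⟫ := by
    intro x
    have h1 : |⟪T x, x⟫| ≤ ‖T x‖ * ‖x‖ := abs_real_inner_le_norm _ _
    have h2 : ‖T x‖ * ‖x‖ ≤ C * ‖x‖ * ‖x‖ :=
      mul_le_mul_of_nonneg_right (hnormT x) (norm_nonneg x)
    rw [abs_le] at h1
    nlinarith [h1.1]
  -- the infimum of the Rayleigh quotient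
  set μ0 : ℝ := ⨅ x : { x : EuclideanSpace ℝ (Fin d) // x ≠ 0 },
    RCLike.re ⟪T x, x⟫ / ‖(x : EuclideanSpace ℝ (Fin d))‖ ^ 2 with hμ0
  have heig : Module.End.HasEigenvalue T μ0 :=
    LinearMap.IsSymmetric.hasEigenvalue_iInf_of_finiteDimensional hT
  obtain ⟨w, hw⟩ := heig.exists_hasEigenvector
  have hBddrange : BddBelow (Set.range fun x : { x : EuclideanSpace ℝ (Fin d) // x ≠ 0 } =>
      RCLike.re ⟪T x, x⟫ / ‖(x : EuclideanSpace ℝ (Fin d))‖ ^ 2) := by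
    refine ⟨-C, ?_⟩
    rintro _ ⟨x, rfl⟩
    have hx : 0 < ‖(x : EuclideanSpace ℝ (Fin d))‖ ^ 2 :=
      pow_pos (norm_pos_iff.mpr x.2) 2
    rw [le_div_iff₀ hx]
    simpa using (by simpa using hbound x : -(C * ‖(x : EuclideanSpace ℝ (Fin d))‖ ^ 2) ≤ ⟪T x, x⟫)
  -- μ0 belongs to the eigenvalue set of M
  have hmem : μ0 ∈ {r : ℝ | ∃ v : Fin d → ℝ, v ≠ 0 ∧ M.mulVec v = r • v} := by
    refine ⟨WithLp.equiv 2 (Fin d → ℝ) w, ?_, ?_⟩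
    · intro h
      apply hw.2
      have := congrArg (WithLp.equiv 2 (Fin d → ℝ)).symm h
      simpa using this
    · have happ : T w = μ0 • w := hw.apply_eq_smul
      have := congrArg (WithLp.equiv 2 (Fin d → ℝ)) happ
      exact this
  have hSbdd : BddBelow {r : ℝ | ∃ v : Fin d → ℝ, v ≠ 0 ∧ M.mulVec v = r • v} := by
    refine ⟨-C, ?_⟩
    rintro r ⟨u, hu0, hur⟩
    set ue : EuclideanSpace ℝ (Fin d) := (WithLp.equiv 2 (Fin d → ℝ)).symm u with hue
    have hue0 : ue ≠ 0 := fun h => hu0 (by simpa [hue] using congrArg (WithLp.equiv 2 (Fin d → ℝ)) h)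
    have hTue : T ue = r • ue := by
      rw [hTdef, Matrix.toEuclideanLin_apply, hue]
      change WithLp.toLp 2 (M *ᵥ u) = _
      rw [hur]; rfl
    have hinner : ⟪T ue, ue⟫ = r * ‖ue‖ ^ 2 := by
      rw [hTue, real_inner_smul_left, real_inner_self_eq_norm_sq]
    have h1 := hbound ue
    rw [hinner] at h1
    have hpos : 0 < ‖ue‖ ^ 2 := pow_pos (norm_pos_iff.mpr hue0) 2
    nlinarith
  have hlam_le : lambdaMin M ≤ μ0 := csInf_le hSbdd hmem
  rcases eq_or_ne v 0 with rfl | hv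
  · simp
  · set ve : EuclideanSpace ℝ (Fin d) := (WithLp.equiv 2 (Fin d → ℝ)).symm v with hve
    have hve0 : ve ≠ 0 := fun h => hv (by simpa [hve] using congrArg (WithLp.equiv 2 (Fin d → ℝ)) h)
    have hray : μ0 ≤ RCLike.re ⟪T ve, ve⟫ / ‖ve‖ ^ 2 :=
      ciInf_le hBddrange ⟨ve, hve0⟩
    have hinner : ⟪T ve, ve⟫ = v ⬝ᵥ M.mulVec v := by
      rw [hTdef, Matrix.toEuclideanLin_apply, hve]
      change ⟪WithLp.toLp 2 (M *ᵥ v), WithLp.toLp 2 v⟫ = _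
      rw [PiLp.inner_apply]
      rw [dotProduct_comm]
      refine Finset.sum_congr rfl fun i _ => ?_
      simp [RCLike.inner_apply, mul_comm]
    have hnorm : ‖ve‖ ^ 2 = ∑ i, v i ^ 2 := by
      rw [← euclNorm_eq_norm, sq_euclNorm]
    have hpos : 0 < ∑ i, v i ^ 2 := by
      rw [← hnorm]; exact pow_pos (norm_pos_iff.mpr hve0) 2
    have : μ0 ≤ (v ⬝ᵥ M.mulVec v) / (∑ i, v i ^ 2) := by
      rw [← hinner, ← hnorm]
      simpa using hray
    calc lambdaMin M * (∑ i, v i ^ 2) ≤ μ0 * (∑ i, v i ^ 2) :=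
          mul_le_mul_of_nonneg_right hlam_le hpos.le
      _ ≤ (v ⬝ᵥ M.mulVec v) / (∑ i, v i ^ 2) * (∑ i, v i ^ 2) :=
          mul_le_mul_of_nonneg_right this hpos.le
      _ = v ⬝ᵥ M.mulVec v := div_mul_cancel₀ _ hpos.ne'

end LogAux


namespace LogAux

lemma two_sqrt_le {x z : ℝ} (hx : 0 ≤ x) (hz : 0 ≤ z) : 2 * Real.sqrt (x * z) ≤ x + z := by
  nlinarith [Real.sq_sqrt hx, Real.sq_sqrt hz, Real.sqrt_nonneg x, Real.sqrt_nonneg z,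
    sq_nonneg (Real.sqrt x - Real.sqrt z), Real.sqrt_mul hx z]

end LogAux

end Aux

set_option maxHeartbeats 2000000 in
open LogAux in
/-- **Lemma (lower bound on the gradient norm from the excess risk, logistic setting).**
If `L(θ) − L(θ*) > η` then
`‖∇L(θ)‖ ≥ Λ_min √η / (√2 D_X (1 + e^{D_X(‖θ*‖ + √(8η/D_X²))}))`, where
`∇L(θ) = E[−yX/(1 + e^{yθᵀX})]`. -/
theorem logistic_gradient_lower_bound
    {Ω : Type*} [MeasurableSpace Ω] (μ : Measure Ω) [IsProbabilityMeasure μ]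
    {d : ℕ} (hd : 1 ≤ d)
    (X : Ω → Fin d → ℝ) (y : Ω → ℝ) (hXmeas : Measurable X) (hymeas : Measurable y)
    (hy : ∀ᵐ ω ∂μ, y ω = 1 ∨ y ω = -1)
    (DX : ℝ) (hDX : 0 < DX) (hXbdd : ∀ᵐ ω ∂μ, euclNorm (X ω) ≤ DX)
    (Λmin : ℝ) (hΛ : Λmin = lambdaMin (Matrix.of fun i j => ∫ ω, X ω i * X ω j ∂μ))
    (hΛpos : 0 < Λmin)
    (L : (Fin d → ℝ) → ℝ)
    (hL : ∀ θ, L θ = ∫ ω, Real.log (1 + Real.exp (-(y ω) * (θ ⬝ᵥ X ω))) ∂μ)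
    (θstar : Fin d → ℝ) (hmin : ∀ θ, L θstar ≤ L θ)
    (η : ℝ) (hη : 0 < η) (θ : Fin d → ℝ) (hgap : η < L θ - L θstar) :
    Λmin * Real.sqrt η /
        (Real.sqrt 2 * DX *
          (1 + Real.exp (DX * (euclNorm θstar + Real.sqrt (8 * η / DX ^ 2)))))
      ≤ euclNorm (fun i => ∫ ω, -(y ω) * X ω i / (1 + Real.exp (y ω * (θ ⬝ᵥ X ω))) ∂μ) := by
  classical
  set ρ : ℝ := Real.sqrt (8 * η / DX ^ 2) with hρdef
  set r : ℝ := euclNorm θstar + ρ with hrdef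
  set R : ℝ := DX * r with hRdef
  have hρpos : 0 < ρ := Real.sqrt_pos.mpr (by positivity)
  have hexpR := Real.exp_pos R
  have hE1 : (0:ℝ) < 1 + Real.exp R := by linarith
  set c : ℝ := (2 * (1 + Real.exp R))⁻¹ with hcdef
  have hcpos : 0 < c := by rw [hcdef]; positivity
  -- measurability toolkit
  have hXi : ∀ i, Measurable fun ω => X ω i := fun i => (measurable_pi_apply i).comp hXmeas
  have hdotm : ∀ ϑ : Fin d → ℝ, Measurable fun ω => ϑ ⬝ᵥ X ω := by
    intro ϑ
    have : (fun ω => ϑ ⬝ᵥ X ω) = fun ω => ∑ i, ϑ i * X ω i := rfl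
    rw [this]
    exact Finset.measurable_sum _ fun i _ => (hXi i).const_mul (ϑ i)
  -- a.e. bounds
  have hXiB : ∀ i, ∀ᵐ ω ∂μ, |X ω i| ≤ DX := by
    intro i
    filter_upwards [hXbdd] with ω h
    exact (abs_coord_le (X ω) i).trans h
  have hdotB : ∀ ϑ : Fin d → ℝ, ∀ᵐ ω ∂μ, |ϑ ⬝ᵥ X ω| ≤ euclNorm ϑ * DX := by
    intro ϑ
    filter_upwards [hXbdd] with ω h
    exact (abs_dot_le ϑ (X ω)).trans
      (mul_le_mul_of_nonneg_left h (euclNorm_nonneg ϑ))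
  have hyB : ∀ᵐ ω ∂μ, |y ω| = 1 := by
    filter_upwards [hy] with ω h
    rcases h with h | h <;> rw [h] <;> norm_num
  -- integrability
  have intH : ∀ (ϑ : Fin d → ℝ) (i : Fin d),
      Integrable (fun ω => -(y ω) * X ω i / (1 + Real.exp (y ω * (ϑ ⬝ᵥ X ω)))) μ := by
    intro ϑ i
    refine (integrable_const DX).mono' ?_ ?_
    · exact ((hymeas.neg.mul (hXi i)).div
        (measurable_const.add ((hymeas.mul (hdotm ϑ)).exp))).aestronglyMeasurable
    · filter_upwards [hXiB i, hyB] with ω h1 h2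
      have hden : (1:ℝ) ≤ 1 + Real.exp (y ω * (ϑ ⬝ᵥ X ω)) := by
        linarith [Real.exp_pos (y ω * (ϑ ⬝ᵥ X ω))]
      rw [Real.norm_eq_abs, abs_div]
      have hnum : |-(y ω) * X ω i| ≤ DX := by
        rw [abs_mul, abs_neg, h2, one_mul]; exact h1
      have habs : |1 + Real.exp (y ω * (ϑ ⬝ᵥ X ω))| = 1 + Real.exp (y ω * (ϑ ⬝ᵥ X ω)) :=
        abs_of_nonneg (by linarith)
      rw [habs]
      exact (div_le_self (abs_nonneg _) hden).trans hnum
  have intF : ∀ ϑ : Fin d → ℝ,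
      Integrable (fun ω => Real.log (1 + Real.exp (-(y ω) * (ϑ ⬝ᵥ X ω)))) μ := by
    intro ϑ
    refine (integrable_const (Real.log (1 + Real.exp (euclNorm ϑ * DX)))).mono' ?_ ?_
    · exact ((measurable_const.add ((hymeas.neg.mul (hdotm ϑ)).exp)).log).aestronglyMeasurable
    · filter_upwards [hdotB ϑ, hyB] with ω h1 h2
      have harg : -(y ω) * (ϑ ⬝ᵥ X ω) ≤ euclNorm ϑ * DX := by
        calc -(y ω) * (ϑ ⬝ᵥ X ω) ≤ |(-(y ω)) * (ϑ ⬝ᵥ X ω)| := le_abs_self _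
          _ = |ϑ ⬝ᵥ X ω| := by rw [abs_mul, abs_neg, h2, one_mul]
          _ ≤ euclNorm ϑ * DX := h1
      have h0 : (0:ℝ) ≤ Real.log (1 + Real.exp (-(y ω) * (ϑ ⬝ᵥ X ω))) :=
        Real.log_nonneg (by linarith [Real.exp_pos (-(y ω) * (ϑ ⬝ᵥ X ω))])
      rw [Real.norm_eq_abs, abs_of_nonneg h0]
      apply Real.log_le_log (by positivity)
      have := Real.exp_le_exp.mpr harg
      linarith
  have intSq : ∀ v : Fin d → ℝ, Integrable (fun ω => (v ⬝ᵥ X ω) ^ 2) μ := by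
    intro v
    refine (integrable_const ((euclNorm v * DX) ^ 2)).mono' ?_ ?_
    · exact ((hdotm v).pow_const 2).aestronglyMeasurable
    · filter_upwards [hdotB v] with ω h1
      rw [Real.norm_eq_abs, abs_of_nonneg (sq_nonneg _), ← sq_abs]
      exact pow_le_pow_left₀ (abs_nonneg _) h1 2
  have intMid : ∀ ϑ1 ϑ2 : Fin d → ℝ,
      Integrable (fun ω => -(y ω) * (ϑ2 ⬝ᵥ X ω - ϑ1 ⬝ᵥ X ω) /
        (1 + Real.exp (y ω * (ϑ1 ⬝ᵥ X ω)))) μ := by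
    intro ϑ1 ϑ2
    refine (integrable_const (euclNorm ϑ2 * DX + euclNorm ϑ1 * DX)).mono' ?_ ?_
    · exact ((hymeas.neg.mul ((hdotm ϑ2).sub (hdotm ϑ1))).div
        (measurable_const.add ((hymeas.mul (hdotm ϑ1)).exp))).aestronglyMeasurable
    · filter_upwards [hdotB ϑ1, hdotB ϑ2, hyB] with ω h1 h2 h3
      have hden : (1:ℝ) ≤ 1 + Real.exp (y ω * (ϑ1 ⬝ᵥ X ω)) := by
        linarith [Real.exp_pos (y ω * (ϑ1 ⬝ᵥ X ω))]
      rw [Real.norm_eq_abs, abs_div]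
      have hnum : |(-(y ω)) * (ϑ2 ⬝ᵥ X ω - ϑ1 ⬝ᵥ X ω)| ≤ euclNorm ϑ2 * DX + euclNorm ϑ1 * DX := by
        rw [abs_mul, abs_neg, h3, one_mul]
        calc |ϑ2 ⬝ᵥ X ω - ϑ1 ⬝ᵥ X ω| ≤ |ϑ2 ⬝ᵥ X ω| + |ϑ1 ⬝ᵥ X ω| := abs_sub _ _
          _ ≤ euclNorm ϑ2 * DX + euclNorm ϑ1 * DX := add_le_add h2 h1
      have habs : |1 + Real.exp (y ω * (ϑ1 ⬝ᵥ X ω))| = 1 + Real.exp (y ω * (ϑ1 ⬝ᵥ X ω)) :=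
        abs_of_nonneg (by linarith)
      rw [habs]
      exact (div_le_self (abs_nonneg _) hden).trans hnum
  -- dot-product of difference
  have hdsub : ∀ (ϑ1 ϑ2 : Fin d → ℝ) (ω : Ω),
      ϑ2 ⬝ᵥ X ω - ϑ1 ⬝ᵥ X ω = ∑ i, (ϑ2 i - ϑ1 i) * X ω i := by
    intro ϑ1 ϑ2 ω
    rw [dotProduct, dotProduct, ← Finset.sum_sub_distrib]
    exact Finset.sum_congr rfl fun i _ => by ring
  -- the sum-integral exchange for the gradient-like vector
  have hsumG : ∀ ϑ1 ϑ2 : Fin d → ℝ,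
      ∑ i, (∫ ω, -(y ω) * X ω i / (1 + Real.exp (y ω * (ϑ1 ⬝ᵥ X ω))) ∂μ) * (ϑ2 i - ϑ1 i)
        = ∫ ω, -(y ω) * (ϑ2 ⬝ᵥ X ω - ϑ1 ⬝ᵥ X ω) / (1 + Real.exp (y ω * (ϑ1 ⬝ᵥ X ω))) ∂μ := by
    intro ϑ1 ϑ2
    have h1 : ∀ i ∈ Finset.univ, (∫ ω, -(y ω) * X ω i /
          (1 + Real.exp (y ω * (ϑ1 ⬝ᵥ X ω))) ∂μ) * (ϑ2 i - ϑ1 i)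
        = ∫ ω, (-(y ω) * X ω i / (1 + Real.exp (y ω * (ϑ1 ⬝ᵥ X ω)))) * (ϑ2 i - ϑ1 i) ∂μ :=
      fun i _ => (integral_mul_const _ _).symm
    rw [Finset.sum_congr rfl h1,
      ← integral_finset_sum _ (fun i _ => (intH ϑ1 i).mul_const _)]
    congr 1
    funext ω
    rw [hdsub ϑ1 ϑ2 ω, Finset.mul_sum, Finset.sum_div]
    exact Finset.sum_congr rfl fun i _ => by ring
  -- convexity inequality (integrated)
  have key0 : ∀ ϑ1 ϑ2 : Fin d → ℝ,
      L ϑ1 + ∑ i, (∫ ω, -(y ω) * X ω i / (1 + Real.exp (y ω * (ϑ1 ⬝ᵥ X ω))) ∂μ)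
          * (ϑ2 i - ϑ1 i) ≤ L ϑ2 := by
    intro ϑ1 ϑ2
    have hae : (fun ω => Real.log (1 + Real.exp (-(y ω) * (ϑ1 ⬝ᵥ X ω)))
        + -(y ω) * (ϑ2 ⬝ᵥ X ω - ϑ1 ⬝ᵥ X ω) / (1 + Real.exp (y ω * (ϑ1 ⬝ᵥ X ω))))
        ≤ᵐ[μ] fun ω => Real.log (1 + Real.exp (-(y ω) * (ϑ2 ⬝ᵥ X ω))) := by
      filter_upwards with ω
      exact pt_convex (y ω) _ _
    have hmono : ∫ ω, (Real.log (1 + Real.exp (-(y ω) * (ϑ1 ⬝ᵥ X ω)))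
        + -(y ω) * (ϑ2 ⬝ᵥ X ω - ϑ1 ⬝ᵥ X ω) / (1 + Real.exp (y ω * (ϑ1 ⬝ᵥ X ω)))) ∂μ
        ≤ ∫ ω, Real.log (1 + Real.exp (-(y ω) * (ϑ2 ⬝ᵥ X ω))) ∂μ :=
      integral_mono_ae ((intF ϑ1).add (intMid ϑ1 ϑ2)) (intF ϑ2) hae
    rw [integral_add (intF ϑ1) (intMid ϑ1 ϑ2)] at hmono
    rw [hL, hL, hsumG]
    exact hmono
  -- integrability of squared difference
  have intSqd : ∀ ϑ1 ϑ2 : Fin d → ℝ,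
      Integrable (fun ω => (ϑ2 ⬝ᵥ X ω - ϑ1 ⬝ᵥ X ω) ^ 2) μ := by
    intro ϑ1 ϑ2
    have heq : (fun ω => (ϑ2 ⬝ᵥ X ω - ϑ1 ⬝ᵥ X ω) ^ 2)
        = fun ω => ((fun i => ϑ2 i - ϑ1 i) ⬝ᵥ X ω) ^ 2 := by
      funext ω
      rw [hdsub ϑ1 ϑ2 ω]
      rfl
    rw [heq]
    exact intSq _
  -- strong convexity inequality (integrated), on the ball of radius r
  have key2 : ∀ ϑ1 ϑ2 : Fin d → ℝ, euclNorm ϑ1 ≤ r → euclNorm ϑ2 ≤ r →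
      L ϑ1 + (∑ i, (∫ ω, -(y ω) * X ω i / (1 + Real.exp (y ω * (ϑ1 ⬝ᵥ X ω))) ∂μ)
          * (ϑ2 i - ϑ1 i))
        + c / 2 * ∫ ω, (ϑ2 ⬝ᵥ X ω - ϑ1 ⬝ᵥ X ω) ^ 2 ∂μ ≤ L ϑ2 := by
    intro ϑ1 ϑ2 h1r h2r
    have hae : (fun ω => Real.log (1 + Real.exp (-(y ω) * (ϑ1 ⬝ᵥ X ω)))
        + -(y ω) * (ϑ2 ⬝ᵥ X ω - ϑ1 ⬝ᵥ X ω) / (1 + Real.exp (y ω * (ϑ1 ⬝ᵥ X ω)))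
        + c / 2 * (ϑ2 ⬝ᵥ X ω - ϑ1 ⬝ᵥ X ω) ^ 2)
        ≤ᵐ[μ] fun ω => Real.log (1 + Real.exp (-(y ω) * (ϑ2 ⬝ᵥ X ω))) := by
      filter_upwards [hy, hdotB ϑ1, hdotB ϑ2] with ω hyω hd1 hd2
      have ha : |ϑ1 ⬝ᵥ X ω| ≤ R := by
        rw [hRdef]
        calc |ϑ1 ⬝ᵥ X ω| ≤ euclNorm ϑ1 * DX := hd1
          _ ≤ r * DX := mul_le_mul_of_nonneg_right h1r hDX.le
          _ = DX * r := mul_comm _ _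
      have hb : |ϑ2 ⬝ᵥ X ω| ≤ R := by
        rw [hRdef]
        calc |ϑ2 ⬝ᵥ X ω| ≤ euclNorm ϑ2 * DX := hd2
          _ ≤ r * DX := mul_le_mul_of_nonneg_right h2r hDX.le
          _ = DX * r := mul_comm _ _
      have hpt := pt_strong hyω ha hb
      rw [hcdef]
      exact hpt
    have hmono : ∫ ω, (Real.log (1 + Real.exp (-(y ω) * (ϑ1 ⬝ᵥ X ω)))
        + -(y ω) * (ϑ2 ⬝ᵥ X ω - ϑ1 ⬝ᵥ X ω) / (1 + Real.exp (y ω * (ϑ1 ⬝ᵥ X ω)))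
        + c / 2 * (ϑ2 ⬝ᵥ X ω - ϑ1 ⬝ᵥ X ω) ^ 2) ∂μ
        ≤ ∫ ω, Real.log (1 + Real.exp (-(y ω) * (ϑ2 ⬝ᵥ X ω))) ∂μ :=
      integral_mono_ae (((intF ϑ1).add (intMid ϑ1 ϑ2)).add
        ((intSqd ϑ1 ϑ2).const_mul (c / 2))) (intF ϑ2) hae
    have intAdd : Integrable (fun ω => Real.log (1 + Real.exp (-(y ω) * (ϑ1 ⬝ᵥ X ω)))
        + -(y ω) * (ϑ2 ⬝ᵥ X ω - ϑ1 ⬝ᵥ X ω) / (1 + Real.exp (y ω * (ϑ1 ⬝ᵥ X ω)))) μ :=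
      (intF ϑ1).add (intMid ϑ1 ϑ2)
    rw [integral_add intAdd ((intSqd ϑ1 ϑ2).const_mul (c / 2)),
      integral_add (intF ϑ1) (intMid ϑ1 ϑ2), integral_const_mul] at hmono
    rw [hL, hL, hsumG]
    exact hmono
  -- smoothness inequality (integrated)
  have sqInt : ∀ ϑ1 ϑ2 : Fin d → ℝ,
      ∫ ω, (ϑ2 ⬝ᵥ X ω - ϑ1 ⬝ᵥ X ω) ^ 2 ∂μ ≤ DX ^ 2 * ∑ i, (ϑ2 i - ϑ1 i) ^ 2 := by
    intro ϑ1 ϑ2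
    have heq : (fun ω => (ϑ2 ⬝ᵥ X ω - ϑ1 ⬝ᵥ X ω) ^ 2)
        = fun ω => ((fun i => ϑ2 i - ϑ1 i) ⬝ᵥ X ω) ^ 2 := by
      funext ω; rw [hdsub ϑ1 ϑ2 ω]; rfl
    have hb : ∀ᵐ ω ∂μ, ((fun i => ϑ2 i - ϑ1 i) ⬝ᵥ X ω) ^ 2
        ≤ (euclNorm (fun i => ϑ2 i - ϑ1 i) * DX) ^ 2 := by
      filter_upwards [hdotB (fun i => ϑ2 i - ϑ1 i)] with ω h1
      rw [← sq_abs]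
      exact pow_le_pow_left₀ (abs_nonneg _) h1 2
    have hmono := integral_mono_ae (intSq (fun i => ϑ2 i - ϑ1 i))
      (integrable_const _) hb
    rw [integral_const] at hmono
    simp only [probReal_univ, smul_eq_mul, one_mul] at hmono
    rw [heq]
    calc ∫ ω, ((fun i => ϑ2 i - ϑ1 i) ⬝ᵥ X ω) ^ 2 ∂μ
        ≤ (euclNorm (fun i => ϑ2 i - ϑ1 i) * DX) ^ 2 := hmono
      _ = DX ^ 2 * ∑ i, (ϑ2 i - ϑ1 i) ^ 2 := by
          rw [mul_pow, sq_euclNorm]; ring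
  have keyS : ∀ ϑ2 : Fin d → ℝ, L ϑ2 ≤ L θstar
      + (∑ i, (∫ ω, -(y ω) * X ω i / (1 + Real.exp (y ω * (θstar ⬝ᵥ X ω))) ∂μ)
          * (ϑ2 i - θstar i))
      + DX ^ 2 / 8 * ∑ i, (ϑ2 i - θstar i) ^ 2 := by
    intro ϑ2
    have hae : (fun ω => Real.log (1 + Real.exp (-(y ω) * (ϑ2 ⬝ᵥ X ω))))
        ≤ᵐ[μ] (fun ω => Real.log (1 + Real.exp (-(y ω) * (θstar ⬝ᵥ X ω)))
          + -(y ω) * (ϑ2 ⬝ᵥ X ω - θstar ⬝ᵥ X ω) / (1 + Real.exp (y ω * (θstar ⬝ᵥ X ω)))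
          + 1 / 8 * (ϑ2 ⬝ᵥ X ω - θstar ⬝ᵥ X ω) ^ 2) := by
      filter_upwards [hy] with ω hyω
      exact pt_smooth hyω _ _
    have hmono : ∫ ω, Real.log (1 + Real.exp (-(y ω) * (ϑ2 ⬝ᵥ X ω))) ∂μ
        ≤ ∫ ω, (Real.log (1 + Real.exp (-(y ω) * (θstar ⬝ᵥ X ω)))
          + -(y ω) * (ϑ2 ⬝ᵥ X ω - θstar ⬝ᵥ X ω) / (1 + Real.exp (y ω * (θstar ⬝ᵥ X ω)))
          + 1 / 8 * (ϑ2 ⬝ᵥ X ω - θstar ⬝ᵥ X ω) ^ 2) ∂μ :=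
      integral_mono_ae (intF ϑ2)
        (((intF θstar).add (intMid θstar ϑ2)).add ((intSqd θstar ϑ2).const_mul (1 / 8))) hae
    have intAdd : Integrable (fun ω => Real.log (1 + Real.exp (-(y ω) * (θstar ⬝ᵥ X ω)))
        + -(y ω) * (ϑ2 ⬝ᵥ X ω - θstar ⬝ᵥ X ω) / (1 + Real.exp (y ω * (θstar ⬝ᵥ X ω)))) μ :=
      (intF θstar).add (intMid θstar ϑ2)
    rw [integral_add intAdd ((intSqd θstar ϑ2).const_mul (1 / 8)),
      integral_add (intF θstar) (intMid θstar ϑ2), integral_const_mul] at hmono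
    have hs := hsumG θstar ϑ2
    have hq := sqInt θstar ϑ2
    have h18 : (1:ℝ) / 8 * ∫ ω, (ϑ2 ⬝ᵥ X ω - θstar ⬝ᵥ X ω) ^ 2 ∂μ
        ≤ 1 / 8 * (DX ^ 2 * ∑ i, (ϑ2 i - θstar i) ^ 2) :=
      mul_le_mul_of_nonneg_left hq (by norm_num)
    calc L ϑ2 = ∫ ω, Real.log (1 + Real.exp (-(y ω) * (ϑ2 ⬝ᵥ X ω))) ∂μ := hL ϑ2
      _ ≤ (∫ ω, Real.log (1 + Real.exp (-(y ω) * (θstar ⬝ᵥ X ω))) ∂μ)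
          + (∫ ω, -(y ω) * (ϑ2 ⬝ᵥ X ω - θstar ⬝ᵥ X ω) /
              (1 + Real.exp (y ω * (θstar ⬝ᵥ X ω))) ∂μ)
          + 1 / 8 * ∫ ω, (ϑ2 ⬝ᵥ X ω - θstar ⬝ᵥ X ω) ^ 2 ∂μ := hmono
      _ ≤ (∫ ω, Real.log (1 + Real.exp (-(y ω) * (θstar ⬝ᵥ X ω))) ∂μ)
          + (∫ ω, -(y ω) * (ϑ2 ⬝ᵥ X ω - θstar ⬝ᵥ X ω) /
              (1 + Real.exp (y ω * (θstar ⬝ᵥ X ω))) ∂μ)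
          + 1 / 8 * (DX ^ 2 * ∑ i, (ϑ2 i - θstar i) ^ 2) := by linarith [h18]
      _ = L θstar + (∑ i, (∫ ω, -(y ω) * X ω i /
              (1 + Real.exp (y ω * (θstar ⬝ᵥ X ω))) ∂μ) * (ϑ2 i - θstar i))
          + DX ^ 2 / 8 * ∑ i, (ϑ2 i - θstar i) ^ 2 := by
          rw [hL θstar, ← hs]
          ring
  -- Jensen inequality (integrated)
  have keyJ : ∀ l : ℝ, 0 ≤ l → l ≤ 1 →
      L (fun i => (1 - l) * θstar i + l * θ i) ≤ (1 - l) * L θstar + l * L θ := by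
    intro l h0 h1
    have hcombo : ∀ ω, (fun i => (1 - l) * θstar i + l * θ i) ⬝ᵥ X ω
        = (1 - l) * (θstar ⬝ᵥ X ω) + l * (θ ⬝ᵥ X ω) := by
      intro ω
      rw [dotProduct, dotProduct, dotProduct, Finset.mul_sum,
        Finset.mul_sum, ← Finset.sum_add_distrib]
      exact Finset.sum_congr rfl fun i _ => by ring
    rw [hL, hL, hL]
    have hae : (fun ω => Real.log (1 + Real.exp (-(y ω) *
          ((fun i => (1 - l) * θstar i + l * θ i) ⬝ᵥ X ω))))
        ≤ᵐ[μ] fun ω => (1 - l) * Real.log (1 + Real.exp (-(y ω) * (θstar ⬝ᵥ X ω)))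
          + l * Real.log (1 + Real.exp (-(y ω) * (θ ⬝ᵥ X ω))) := by
      filter_upwards with ω
      rw [hcombo ω]
      exact pt_jensen (y ω) _ _ l h0 h1
    have hmono : ∫ ω, Real.log (1 + Real.exp (-(y ω) *
          ((fun i => (1 - l) * θstar i + l * θ i) ⬝ᵥ X ω))) ∂μ
        ≤ ∫ ω, ((1 - l) * Real.log (1 + Real.exp (-(y ω) * (θstar ⬝ᵥ X ω)))
          + l * Real.log (1 + Real.exp (-(y ω) * (θ ⬝ᵥ X ω)))) ∂μ :=
      integral_mono_ae (intF _)
        (((intF θstar).const_mul (1 - l)).add ((intF θ).const_mul l)) hae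
    rw [integral_add ((intF θstar).const_mul (1 - l)) ((intF θ).const_mul l),
      integral_const_mul, integral_const_mul] at hmono
    exact hmono
  -- quadratic form lower bound via the smallest eigenvalue
  have intProd : ∀ i j : Fin d, Integrable (fun ω => X ω i * X ω j) μ := by
    intro i j
    refine (integrable_const (DX * DX)).mono' ((hXi i).mul (hXi j)).aestronglyMeasurable ?_
    filter_upwards [hXiB i, hXiB j] with ω h1 h2
    rw [Real.norm_eq_abs, abs_mul]
    exact mul_le_mul h1 h2 (abs_nonneg _) hDX.le
  have quadLB : ∀ v : Fin d → ℝ,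
      Λmin * ∑ i, v i ^ 2 ≤ ∫ ω, (v ⬝ᵥ X ω) ^ 2 ∂μ := by
    intro v
    set M : Matrix (Fin d) (Fin d) ℝ := Matrix.of fun i j => ∫ ω, X ω i * X ω j ∂μ with hM
    have hherm : M.IsHermitian := by
      show Mᴴ = M
      ext i j
      rw [Matrix.conjTranspose_apply, star_trivial]
      show (∫ ω, X ω j * X ω i ∂μ) = ∫ ω, X ω i * X ω j ∂μ
      exact integral_congr_ae (Filter.Eventually.of_forall fun ω => mul_comm _ _)
    have quad_eq : v ⬝ᵥ M.mulVec v = ∫ ω, (v ⬝ᵥ X ω) ^ 2 ∂μ := by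
      have e1 : (fun ω => (v ⬝ᵥ X ω) ^ 2)
          = fun ω => ∑ i, ∑ j, v i * v j * (X ω i * X ω j) := by
        funext ω
        rw [dotProduct, sq, Finset.sum_mul_sum]
        exact Finset.sum_congr rfl fun i _ => Finset.sum_congr rfl fun j _ => by ring
      rw [e1, integral_finset_sum _ (fun i _ =>
        integrable_finset_sum _ (fun j _ => (intProd i j).const_mul (v i * v j)))]
      have e2 : ∀ i, (∫ ω, ∑ j, v i * v j * (X ω i * X ω j) ∂μ)
          = ∑ j, v i * v j * ∫ ω, X ω i * X ω j ∂μ := by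
        intro i
        rw [integral_finset_sum _ (fun j _ => (intProd i j).const_mul (v i * v j))]
        exact Finset.sum_congr rfl fun j _ => integral_const_mul _ _
      rw [Finset.sum_congr rfl fun i _ => e2 i]
      rw [dotProduct]
      refine (Finset.sum_congr rfl fun i _ => ?_).symm
      rw [Matrix.mulVec, dotProduct, Finset.mul_sum]
      refine Finset.sum_congr rfl fun j _ => ?_
      rw [hM]
      simp only [Matrix.of_apply]
      ring
    rw [← quad_eq, hΛ]
    exact rayleigh_lower hd M hherm v
  have quadLB' : ∀ ϑ1 ϑ2 : Fin d → ℝ,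
      Λmin * ∑ i, (ϑ2 i - ϑ1 i) ^ 2 ≤ ∫ ω, (ϑ2 ⬝ᵥ X ω - ϑ1 ⬝ᵥ X ω) ^ 2 ∂μ := by
    intro ϑ1 ϑ2
    have heq : (fun ω => (ϑ2 ⬝ᵥ X ω - ϑ1 ⬝ᵥ X ω) ^ 2)
        = fun ω => ((fun i => ϑ2 i - ϑ1 i) ⬝ᵥ X ω) ^ 2 := by
      funext ω; rw [hdsub ϑ1 ϑ2 ω]; rfl
    rw [heq]
    exact quadLB _
  -- Λmin ≤ DX ^ 2
  have hΛDX : Λmin ≤ DX ^ 2 := by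
    have hd0 : 0 < d := hd
    set i0 : Fin d := ⟨0, hd0⟩ with hi0
    set e : Fin d → ℝ := Pi.single i0 (1:ℝ) with hedef
    have hsum1 : ∑ i, e i ^ 2 = 1 := by
      have h : ∀ i, e i ^ 2 = if i = i0 then 1 else 0 := by
        intro i
        rcases eq_or_ne i i0 with rfl | h
        · simp [hedef]
        · simp [hedef, Pi.single_apply, h]
      rw [Finset.sum_congr rfl fun i _ => h i, Finset.sum_ite_eq' Finset.univ i0 fun _ => (1:ℝ)]
      simp
    have h1 := quadLB e
    have h2 := sqInt 0 e
    have heq0 : (fun ω => (e ⬝ᵥ X ω - (0 : Fin d → ℝ) ⬝ᵥ X ω) ^ 2)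
        = fun ω => (e ⬝ᵥ X ω) ^ 2 := by
      funext ω; rw [zero_dotProduct, sub_zero]
    have hsum1' : ∑ i, (e i - (0 : Fin d → ℝ) i) ^ 2 = 1 := by
      simpa using hsum1
    rw [heq0, hsum1'] at h2
    rw [hsum1] at h1
    rw [mul_one] at h1
    rw [mul_one] at h2
    linarith
  -- the gradient at θstar vanishes
  have hGs0 : ∀ i0 : Fin d,
      (∫ ω, -(y ω) * X ω i0 / (1 + Real.exp (y ω * (θstar ⬝ᵥ X ω))) ∂μ) = 0 := by
    have hk0 : (0:ℝ) < 4 / DX ^ 2 := by positivity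
    set Gs : Fin d → ℝ :=
      fun i => ∫ ω, -(y ω) * X ω i / (1 + Real.exp (y ω * (θstar ⬝ᵥ X ω))) ∂μ with hGsdef
    set S : ℝ := ∑ i, Gs i ^ 2 with hSdef
    have hS_nonneg : 0 ≤ S := Finset.sum_nonneg fun i _ => sq_nonneg _
    have hw := keyS (fun i => θstar i - 4 / DX ^ 2 * Gs i)
    have h1 : ∑ i, Gs i * ((fun i => θstar i - 4 / DX ^ 2 * Gs i) i - θstar i)
        = -(4 / DX ^ 2) * S := by
      rw [hSdef, Finset.mul_sum]
      exact Finset.sum_congr rfl fun i _ => by ring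
    have h2 : ∑ i, ((fun i => θstar i - 4 / DX ^ 2 * Gs i) i - θstar i) ^ 2
        = (4 / DX ^ 2) ^ 2 * S := by
      rw [hSdef, Finset.mul_sum]
      exact Finset.sum_congr rfl fun i _ => by ring
    rw [h1, h2] at hw
    have hmin' := hmin (fun i => θstar i - 4 / DX ^ 2 * Gs i)
    have hco : DX ^ 2 / 8 * ((4 / DX ^ 2) ^ 2 * S) = 4 / DX ^ 2 / 2 * S := by
      field_simp
      ring
    have hks : 4 / DX ^ 2 / 2 * S ≤ 0 := by linarith [hw, hmin', hco]
    have hSle : S ≤ 0 := by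
      by_contra h
      push_neg at h
      have := mul_pos (show (0:ℝ) < 4 / DX ^ 2 / 2 by positivity) h
      linarith
    have hS0 : S = 0 := le_antisymm hSle hS_nonneg
    intro i0
    have := (Finset.sum_eq_zero_iff_of_nonneg fun i (_ : i ∈ Finset.univ) =>
      sq_nonneg (Gs i)).mp (hSdef ▸ hS0) i0 (Finset.mem_univ i0)
    have hGsi : Gs i0 = 0 := by
      have h := this
      exact pow_eq_zero_iff (two_ne_zero) |>.mp h
    simpa [hGsdef] using hGsi
  -- abbreviations for the final assembly
  have htnn : (0:ℝ) ≤ euclNorm (fun i => θ i - θstar i) := euclNorm_nonneg _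
  have hGdot : L θ - L θstar
      ≤ ∑ i, (∫ ω, -(y ω) * X ω i / (1 + Real.exp (y ω * (θ ⬝ᵥ X ω))) ∂μ)
          * (θ i - θstar i) := by
    have k := key0 θ θstar
    have hsum : ∑ i, (∫ ω, -(y ω) * X ω i / (1 + Real.exp (y ω * (θ ⬝ᵥ X ω))) ∂μ)
          * (θstar i - θ i)
        = -∑ i, (∫ ω, -(y ω) * X ω i / (1 + Real.exp (y ω * (θ ⬝ᵥ X ω))) ∂μ)
          * (θ i - θstar i) := by
      rw [← Finset.sum_neg_distrib]
      exact Finset.sum_congr rfl fun i _ => by ring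
    rw [hsum] at k
    linarith
  have hCS : ∑ i, (∫ ω, -(y ω) * X ω i / (1 + Real.exp (y ω * (θ ⬝ᵥ X ω))) ∂μ)
        * (θ i - θstar i)
      ≤ euclNorm (fun i => ∫ ω, -(y ω) * X ω i / (1 + Real.exp (y ω * (θ ⬝ᵥ X ω))) ∂μ)
        * euclNorm (fun i => θ i - θstar i) := dot_le _ _
  have htpos : 0 < euclNorm (fun i => θ i - θstar i) := by
    rcases eq_or_lt_of_le htnn with h0 | h
    · exfalso
      have hu0 : (fun i => θ i - θstar i) = 0 := eq_of_euclNorm_zero h0.symm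
      have : θ = θstar := by
        funext i
        have := congrFun hu0 i
        simp only [Pi.zero_apply] at this
        linarith
      rw [this] at hgap
      simp at hgap
      linarith
    · exact h
  rcases le_total (euclNorm (fun i => θ i - θstar i)) ρ with htρ | hρt
  · -- Case A : θ is in the ball of radius r
    have hθsr : euclNorm θstar ≤ r := by rw [hrdef]; linarith
    have hθr : euclNorm θ ≤ r := by
      have hθeq : θ = fun i => θstar i + (θ i - θstar i) := funext fun i => by ring
      calc euclNorm θ = euclNorm (fun i => θstar i + (θ i - θstar i)) := by rw [← hθeq]
        _ ≤ euclNorm θstar + euclNorm (fun i => θ i - θstar i) :=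
            euclNorm_triangle _ _
        _ ≤ euclNorm θstar + ρ := by linarith
        _ = r := hrdef.symm
    have k2 := key2 θ θstar hθr hθsr
    have hsum : ∑ i, (∫ ω, -(y ω) * X ω i / (1 + Real.exp (y ω * (θ ⬝ᵥ X ω))) ∂μ)
          * (θstar i - θ i)
        = -∑ i, (∫ ω, -(y ω) * X ω i / (1 + Real.exp (y ω * (θ ⬝ᵥ X ω))) ∂μ)
          * (θ i - θstar i) := by
      rw [← Finset.sum_neg_distrib]
      exact Finset.sum_congr rfl fun i _ => by ring
    rw [hsum] at k2
    have hquad : Λmin * euclNorm (fun i => θ i - θstar i) ^ 2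
        ≤ ∫ ω, (θstar ⬝ᵥ X ω - θ ⬝ᵥ X ω) ^ 2 ∂μ := by
      have h := quadLB' θ θstar
      have e : ∑ i, (θstar i - θ i) ^ 2 = euclNorm (fun i => θ i - θstar i) ^ 2 := by
        rw [sq_euclNorm]
        exact Finset.sum_congr rfl fun i _ => by ring
      rwa [e] at h
    have hc2 : 0 ≤ c / 2 := by positivity
    have hq : η + c / 2 * (Λmin * euclNorm (fun i => θ i - θstar i) ^ 2)
        ≤ euclNorm (fun i => ∫ ω, -(y ω) * X ω i / (1 + Real.exp (y ω * (θ ⬝ᵥ X ω))) ∂μ)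
          * euclNorm (fun i => θ i - θstar i) := by
      have := mul_le_mul_of_nonneg_left hquad hc2
      linarith [k2, hgap, hCS]
    set t := euclNorm (fun i => θ i - θstar i) with htdef
    set K : ℝ := Real.sqrt (η * (c / 2 * Λmin)) with hKdef
    have hKt : 2 * (K * t) ≤ η + c / 2 * (Λmin * t ^ 2) := by
      have h := two_sqrt_le (x := η) (z := c / 2 * Λmin * t ^ 2) hη.le (by positivity)
      have e : Real.sqrt (η * (c / 2 * Λmin * t ^ 2)) = K * t := by
        rw [show η * (c / 2 * Λmin * t ^ 2) = η * (c / 2 * Λmin) * t ^ 2 by ring,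
          Real.sqrt_mul (by positivity), Real.sqrt_sq htpos.le, hKdef]
      rw [e] at h
      linarith
    have hE1one : (1:ℝ) ≤ 1 + Real.exp R := by linarith
    have hKsq : K ^ 2 = η * (c / 2 * Λmin) := Real.sq_sqrt (by positivity)
    have hBK : Λmin * Real.sqrt η / (Real.sqrt 2 * DX * (1 + Real.exp R)) ≤ 2 * K := by
      have e1 : (2 * K) ^ 2 = η * Λmin / (1 + Real.exp R) := by
        rw [mul_pow, hKsq, hcdef]
        field_simp
      have hBnn : 0 ≤ Λmin * Real.sqrt η / (Real.sqrt 2 * DX * (1 + Real.exp R)) := by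
        positivity
      have hKnn : (0:ℝ) ≤ 2 * K := by positivity
      have hsq : (Λmin * Real.sqrt η / (Real.sqrt 2 * DX * (1 + Real.exp R))) ^ 2
          ≤ (2 * K) ^ 2 := by
        rw [e1, div_pow, div_le_div_iff₀ (by positivity) hE1]
        have e3 : Real.sqrt η ^ 2 = η := Real.sq_sqrt hη.le
        have e4 : Real.sqrt 2 ^ 2 = 2 := Real.sq_sqrt (by norm_num)
        have expand : (Real.sqrt 2 * DX * (1 + Real.exp R)) ^ 2
            = 2 * DX ^ 2 * (1 + Real.exp R) ^ 2 := by
          rw [mul_pow, mul_pow, e4]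
        rw [expand, mul_pow, e3]
        have hfac : Λmin ≤ 2 * DX ^ 2 * (1 + Real.exp R) := by
          have h1 : DX ^ 2 * 1 ≤ DX ^ 2 * (2 * (1 + Real.exp R)) :=
            mul_le_mul_of_nonneg_left (by linarith) (sq_nonneg DX)
          calc Λmin ≤ DX ^ 2 := hΛDX
            _ = DX ^ 2 * 1 := (mul_one _).symm
            _ ≤ DX ^ 2 * (2 * (1 + Real.exp R)) := h1
            _ = 2 * DX ^ 2 * (1 + Real.exp R) := by ring
        have hbase : (0:ℝ) ≤ Λmin * η * (1 + Real.exp R) := by positivity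
        have hmul := mul_le_mul_of_nonneg_left hfac hbase
        linarith [hmul]
      have := Real.sqrt_le_sqrt hsq
      rwa [Real.sqrt_sq hBnn, Real.sqrt_sq hKnn] at this
    have h2Kt : 2 * K * t ≤ euclNorm (fun i =>
        ∫ ω, -(y ω) * X ω i / (1 + Real.exp (y ω * (θ ⬝ᵥ X ω))) ∂μ) * t := by
      calc 2 * K * t = 2 * (K * t) := by ring
        _ ≤ η + c / 2 * (Λmin * t ^ 2) := hKt
        _ ≤ _ := hq
    have h2K : 2 * K ≤ euclNorm (fun i =>
        ∫ ω, -(y ω) * X ω i / (1 + Real.exp (y ω * (θ ⬝ᵥ X ω))) ∂μ) :=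
      le_of_mul_le_mul_right (by linarith) htpos
    linarith
  · -- Case B : θ is far from θstar
    set t := euclNorm (fun i => θ i - θstar i) with htdef
    set l : ℝ := ρ / t with hldef
    have hl0 : 0 < l := div_pos hρpos htpos
    have hl1 : l ≤ 1 := (div_le_one htpos).mpr hρt
    have hlt : l * t = ρ := div_mul_cancel₀ ρ htpos.ne'
    have hθ'sub : ∀ i : Fin d,
        (fun i => (1 - l) * θstar i + l * θ i) i - θstar i = l * (θ i - θstar i) := by
      intro i; ring
    have hθsr : euclNorm θstar ≤ r := by rw [hrdef]; linarith
    have hθ'r : euclNorm (fun i => (1 - l) * θstar i + l * θ i) ≤ r := by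
      have hθeq : (fun i => (1 - l) * θstar i + l * θ i)
          = fun i => θstar i + l * (θ i - θstar i) := funext fun i => by ring
      calc euclNorm (fun i => (1 - l) * θstar i + l * θ i)
          = euclNorm (fun i => θstar i + l * (θ i - θstar i)) := by rw [hθeq]
        _ ≤ euclNorm θstar + euclNorm (fun i => l * (θ i - θstar i)) :=
            euclNorm_triangle _ _
        _ = euclNorm θstar + l * t := by rw [euclNorm_smul l hl0.le]
        _ = euclNorm θstar + ρ := by rw [hlt]
        _ = r := hrdef.symm
    have k2 := key2 θstar (fun i => (1 - l) * θstar i + l * θ i) hθsr hθ'r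
    have hz : ∑ i, (∫ ω, -(y ω) * X ω i / (1 + Real.exp (y ω * (θstar ⬝ᵥ X ω))) ∂μ)
        * ((fun i => (1 - l) * θstar i + l * θ i) i - θstar i) = 0 :=
      Finset.sum_eq_zero fun i _ => by rw [hGs0 i, zero_mul]
    rw [hz] at k2
    have hquad : Λmin * ρ ^ 2
        ≤ ∫ ω, ((fun i => (1 - l) * θstar i + l * θ i) ⬝ᵥ X ω - θstar ⬝ᵥ X ω) ^ 2 ∂μ := by
      have h := quadLB' θstar (fun i => (1 - l) * θstar i + l * θ i)
      have e : ∑ i, ((fun i => (1 - l) * θstar i + l * θ i) i - θstar i) ^ 2 = ρ ^ 2 := by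
        have : ∀ i : Fin d, ((fun i => (1 - l) * θstar i + l * θ i) i - θstar i) ^ 2
            = l ^ 2 * (θ i - θstar i) ^ 2 := fun i => by ring
        rw [Finset.sum_congr rfl fun i _ => this i, ← Finset.mul_sum, ← sq_euclNorm, ← htdef,
          show l ^ 2 * t ^ 2 = (l * t) ^ 2 by ring, hlt]
      rwa [e] at h
    have hc2 : 0 ≤ c / 2 := by positivity
    have hLθ' : L θstar + c / 2 * (Λmin * ρ ^ 2)
        ≤ L (fun i => (1 - l) * θstar i + l * θ i) := by
      have := mul_le_mul_of_nonneg_left hquad hc2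
      linarith [k2]
    have hJ := keyJ l hl0.le hl1
    have hΔ : c / 2 * Λmin * ρ * t ≤ L θ - L θstar := by
      have hstep : c / 2 * (Λmin * ρ ^ 2) ≤ l * (L θ - L θstar) := by
        have hexp : (1 - l) * L θstar + l * L θ
            = L θstar + l * (L θ - L θstar) := by ring
        rw [hexp] at hJ
        linarith [hLθ', hJ]
      have heql : l * (c / 2 * Λmin * ρ * t) = c / 2 * (Λmin * ρ ^ 2) := by
        rw [show l * (c / 2 * Λmin * ρ * t) = c / 2 * Λmin * ρ * (l * t) by ring, hlt]
        ring
      have h2 : l * (c / 2 * Λmin * ρ * t) ≤ l * (L θ - L θstar) := by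
        rw [heql]; exact hstep
      exact le_of_mul_le_mul_left h2 hl0
    have hGge : c / 2 * Λmin * ρ * t ≤ euclNorm (fun i =>
        ∫ ω, -(y ω) * X ω i / (1 + Real.exp (y ω * (θ ⬝ᵥ X ω))) ∂μ) * t := by
      calc c / 2 * Λmin * ρ * t ≤ L θ - L θstar := hΔ
        _ ≤ _ := hGdot.trans hCS
    have hGge' : c / 2 * Λmin * ρ ≤ euclNorm (fun i =>
        ∫ ω, -(y ω) * X ω i / (1 + Real.exp (y ω * (θ ⬝ᵥ X ω))) ∂μ) :=
      le_of_mul_le_mul_right (by linarith [hGge]) htpos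
    -- the final constant comparison: B ≤ (c/2) Λmin ρ, in fact equality
    have hρeq : ρ = Real.sqrt (8 * η) / DX := by
      rw [hρdef, Real.sqrt_div (by positivity) (DX ^ 2), Real.sqrt_sq hDX.le]
    have hDXρ : Real.sqrt 2 * (DX * ρ) = 4 * Real.sqrt η := by
      rw [hρeq, mul_div_cancel₀ _ hDX.ne', ← Real.sqrt_mul (by norm_num) (8 * η),
        show (2:ℝ) * (8 * η) = 16 * η by ring, Real.sqrt_mul (by norm_num) η,
        show (16:ℝ) = 4 ^ 2 by norm_num, Real.sqrt_sq (by norm_num)]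
    have hBB : Λmin * Real.sqrt η / (Real.sqrt 2 * DX * (1 + Real.exp R))
        ≤ c / 2 * Λmin * ρ := by
      rw [hcdef, div_le_iff₀ (by positivity)]
      have expand : (2 * (1 + Real.exp R))⁻¹ / 2 * Λmin * ρ
            * (Real.sqrt 2 * DX * (1 + Real.exp R))
          = Λmin * (Real.sqrt 2 * (DX * ρ)) / 4 := by
        field_simp
        ring
      rw [expand, hDXρ]
      apply le_of_eq
      ring
    exact hBB.trans hGge'
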